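/- The set of 4-tuples (p,q,r,s) of positive integers with 2 ≤ p ≤ q ≤ r ≤ s and 1/2 + 1/p + 1/q + 1/r + 1/s = 1 (as rational numbers) is finite and has exactly 108 elements. -/
import Mathlib

private lemma key5 (p q r s : ℕ) (hp : 0 < p) (hq : 0 < q) (hr : 0 < r) (hs : 0 < s) :
    (1:ℚ)/2 + 1/p + 1/q + 1/r + 1/s = 1 ↔
    2*(q*r*s + p*r*s + p*q*s + p*q*r) = p*q*r*s := by
  have hp' : (p:ℚ) ≠ 0 := Nat.cast_ne_zero.2 hp.ne'
  have hq' : (q:ℚ) ≠ 0 := Nat.cast_ne_zero.2 hq.ne'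
  have hr' : (r:ℚ) ≠ 0 := Nat.cast_ne_zero.2 hr.ne'
  have hs' : (s:ℚ) ≠ 0 := Nat.cast_ne_zero.2 hs.ne'
  rw [← Nat.cast_inj (R := ℚ)]
  push_cast
  rw [div_add_div _ _ two_ne_zero hp', div_add_div _ _ (mul_ne_zero two_ne_zero hp') hq',
    div_add_div _ _ (by positivity) hr', div_add_div _ _ (by positivity) hs',
    div_eq_one_iff_eq (by positivity)]
  constructor <;> intro h <;> linear_combination h

private def Dd (p q r : ℕ) : ℕ := p*q*r - 2*(q*r + p*r + p*q)

private def Ff : Finset (ℕ×ℕ×ℕ×ℕ) :=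
  (Finset.Icc 3 8 ×ˢ Finset.Icc 3 18).biUnion fun pq =>
    ((Finset.Icc 3 (4*pq.1*pq.2)).filter fun r =>
      pq.1 ≤ pq.2 ∧ pq.2 ≤ r ∧ 2*(pq.2*r + pq.1*r + pq.1*pq.2) < pq.1*pq.2*r ∧
      Dd pq.1 pq.2 r ∣ 2*pq.1*pq.2*r ∧ r ≤ 2*pq.1*pq.2*r / Dd pq.1 pq.2 r).image
      fun r => (pq.1, pq.2, r, 2*pq.1*pq.2*r / Dd pq.1 pq.2 r)

set_option maxRecDepth 20000 in
set_option maxHeartbeats 4000000 in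
private lemma cardFf : Ff.card = 108 := by decide

-- bounds in ℤ
private lemma bounds (P Q R S : ℤ) (hP : 3 ≤ P) (hPQ : P ≤ Q) (hQR : Q ≤ R) (hRS : R ≤ S)
    (hE : 2*(Q*R*S + P*R*S + P*Q*S + P*Q*R) = P*Q*R*S) :
    P ≤ 8 ∧ Q ≤ 18 ∧ 2*(Q*R + P*R + P*Q) < P*Q*R ∧ R ≤ 4*P*Q := by
  have hQ : 3 ≤ Q := hP.trans hPQ
  have hR : 3 ≤ R := hQ.trans hQR
  have hS : 3 ≤ S := hR.trans hRS
  have hP8 : P ≤ 8 := by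
    nlinarith [mul_le_mul_of_nonneg_right hPQ (by nlinarith : (0:ℤ) ≤ R*S),
      mul_le_mul_of_nonneg_right (hPQ.trans hQR) (by nlinarith : (0:ℤ) ≤ Q*S),
      mul_le_mul_of_nonneg_right ((hPQ.trans hQR).trans hRS) (by nlinarith : (0:ℤ) ≤ Q*R),
      mul_pos (mul_pos (by linarith : (0:ℤ) < Q) (by linarith : (0:ℤ) < R)) (by linarith : (0:ℤ) < S)]
  have hPQle : P*Q ≤ 2*Q + 6*P := by
    nlinarith [mul_le_mul_of_nonneg_right hQR (by nlinarith : (0:ℤ) ≤ P*S),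
      mul_le_mul_of_nonneg_right (hQR.trans hRS) (by nlinarith : (0:ℤ) ≤ P*R),
      mul_pos (by linarith : (0:ℤ) < R) (by linarith : (0:ℤ) < S)]
  have hQ18 : Q ≤ 18 := by nlinarith
  have hD : S*(P*Q*R - 2*(Q*R + P*R + P*Q)) = 2*P*Q*R := by linear_combination -hE
  have hDpos : 0 < P*Q*R - 2*(Q*R + P*R + P*Q) := by
    nlinarith [mul_pos (mul_pos (by linarith : (0:ℤ) < P) (by linarith : (0:ℤ) < Q)) (by linarith : (0:ℤ) < R)]
  have hDle : P*Q*R - 2*(Q*R + P*R + P*Q) ≤ 2*P*Q := by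
    have h1 := mul_le_mul_of_nonneg_right hRS hDpos.le
    nlinarith [h1, hD]
  have hnum : 0 < P*Q - 2*Q - 2*P := by nlinarith
  have hR4 : R ≤ 4*P*Q := by
    have h2 : R*1 ≤ R*(P*Q - 2*Q - 2*P) := by
      apply mul_le_mul_of_nonneg_left (by linarith) (by linarith)
    nlinarith [h2, hDle]
  exact ⟨hP8, hQ18, by linarith, hR4⟩
private lemma setEq :
    {x : ℕ × ℕ × ℕ × ℕ |
        0 < x.1 ∧ 0 < x.2.1 ∧ 0 < x.2.2.1 ∧ 0 < x.2.2.2 ∧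
        2 ≤ x.1 ∧ x.1 ≤ x.2.1 ∧ x.2.1 ≤ x.2.2.1 ∧ x.2.2.1 ≤ x.2.2.2 ∧
        (1 : ℚ) / 2 + 1 / x.1 + 1 / x.2.1 + 1 / x.2.2.1 + 1 / x.2.2.2 = 1} = ↑Ff := by
  ext ⟨p, q, r, s⟩
  simp only [Set.mem_setOf_eq, Finset.mem_coe]
  simp only [Ff, Finset.mem_biUnion, Finset.mem_image, Finset.mem_filter, Finset.mem_Icc,
    Finset.mem_product]
  constructor
  · rintro ⟨hp, hq, hr, hs, hp2, hpq, hqr, hrs, heq⟩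
    have hE : 2*(q*r*s + p*r*s + p*q*s + p*q*r) = p*q*r*s := (key5 p q r s hp hq hr hs).1 heq
    have hE' : 2*((q:ℤ)*r*s + p*r*s + p*q*s + p*q*r) = (p:ℤ)*q*r*s := by exact_mod_cast hE
    have hp3 : 3 ≤ p := by
      rcases Nat.lt_or_ge p 3 with h | h
      · interval_cases p
        · exfalso
          have hq' : (1:ℤ) ≤ q := by exact_mod_cast hq
          have hr' : (1:ℤ) ≤ r := by exact_mod_cast hr
          have hs' : (1:ℤ) ≤ s := by exact_mod_cast hs
          nlinarith [hE', mul_pos (mul_pos (by linarith : (0:ℤ) < q) (by linarith : (0:ℤ) < r)) (by linarith : (0:ℤ) < s)]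
      · exact h
    obtain ⟨hP8, hQ18, hDlt, hR4⟩ := bounds p q r s (by exact_mod_cast hp3)
      (by exact_mod_cast hpq) (by exact_mod_cast hqr) (by exact_mod_cast hrs) hE'
    have hp8 : p ≤ 8 := by exact_mod_cast hP8
    have hq18 : q ≤ 18 := by exact_mod_cast hQ18
    have hDlt' : 2*(q*r + p*r + p*q) < p*q*r := by exact_mod_cast hDlt
    have hr4 : r ≤ 4*p*q := by exact_mod_cast hR4
    have hDcast : ((Dd p q r : ℕ) : ℤ) = (p:ℤ)*q*r - 2*((q:ℤ)*r + p*r + p*q) := by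
      simp only [Dd]
      push_cast [Nat.cast_sub hDlt'.le]
      ring
    have hsD : s * Dd p q r = 2*p*q*r := by
      have : (s:ℤ) * ((Dd p q r : ℕ) : ℤ) = 2*(p:ℤ)*q*r := by
        rw [hDcast]; linear_combination -hE'
      exact_mod_cast this
    have hdvd : Dd p q r ∣ 2*p*q*r := ⟨s, by rw [← hsD]; ring⟩
    have hdiv : 2*p*q*r / Dd p q r = s := by
      apply Nat.div_eq_of_eq_mul_left
      · have : (0:ℤ) < ((Dd p q r : ℕ) : ℤ) := by rw [hDcast]; linarith
        exact_mod_cast this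
      · rw [← hsD]
    refine ⟨(p, q), ⟨⟨hp3, hp8⟩, by omega, hq18⟩, r, ⟨⟨by omega, hr4⟩, hpq, hqr, hDlt', hdvd, ?_⟩, ?_⟩
    · rw [hdiv]; exact hrs
    · rw [hdiv]
  · rintro ⟨⟨p', q'⟩, ⟨⟨hp3, hp8⟩, hq3, hq18⟩, r', ⟨⟨hr3, hr4⟩, hpq, hqr, hDlt, hdvd, hrs'⟩, hx⟩
    simp only [Prod.mk.injEq] at hx
    obtain ⟨rfl, rfl, rfl, rfl⟩ := hx
    simp only at hp3 hp8 hq3 hq18 hr3 hr4 hpq hqr hDlt hdvd hrs' ⊢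
    set s := 2*p'*q'*r' / Dd p' q' r' with hsdef
    have hDpos : 0 < Dd p' q' r' := by simp only [Dd]; omega
    have hsD : s * Dd p' q' r' = 2*p'*q'*r' := Nat.div_mul_cancel hdvd
    have hs : 0 < s := by
      rcases Nat.eq_zero_or_pos s with h | h
      · exfalso; rw [h, zero_mul] at hsD; omega
      · exact h
    have hp : 0 < p' := by omega
    have hq : 0 < q' := by omega
    have hr : 0 < r' := by omega
    have hE : 2*(q'*r'*s + p'*r'*s + p'*q'*s + p'*q'*r') = p'*q'*r'*s := by
      have hc : ((Dd p' q' r' : ℕ) : ℤ) = (p':ℤ)*q'*r' - 2*((q':ℤ)*r' + p'*r' + p'*q') := by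
        simp only [Dd]
        push_cast [Nat.cast_sub hDlt.le]
        ring
      have h1 : (s:ℤ) * ((p':ℤ)*q'*r' - 2*((q':ℤ)*r' + p'*r' + p'*q')) = 2*(p':ℤ)*q'*r' := by
        rw [← hc]; exact_mod_cast hsD
      have h2 : 2*((q':ℤ)*r'*s + p'*r'*s + p'*q'*s + p'*q'*r') = (p':ℤ)*q'*r'*s := by
        linear_combination -h1
      exact_mod_cast h2
    exact ⟨hp, hq, hr, hs, by omega, hpq, hqr, hrs', (key5 p' q' r' s hp hq hr hs).2 hE⟩

theorem stmt_5 :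
    ({x : ℕ × ℕ × ℕ × ℕ |
        0 < x.1 ∧ 0 < x.2.1 ∧ 0 < x.2.2.1 ∧ 0 < x.2.2.2 ∧
        2 ≤ x.1 ∧ x.1 ≤ x.2.1 ∧ x.2.1 ≤ x.2.2.1 ∧ x.2.2.1 ≤ x.2.2.2 ∧
        (1 : ℚ) / 2 + 1 / x.1 + 1 / x.2.1 + 1 / x.2.2.1 + 1 / x.2.2.2 = 1}).Finite ∧
    ({x : ℕ × ℕ × ℕ × ℕ |
        0 < x.1 ∧ 0 < x.2.1 ∧ 0 < x.2.2.1 ∧ 0 < x.2.2.2 ∧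
        2 ≤ x.1 ∧ x.1 ≤ x.2.1 ∧ x.2.1 ≤ x.2.2.1 ∧ x.2.2.1 ≤ x.2.2.2 ∧
        (1 : ℚ) / 2 + 1 / x.1 + 1 / x.2.1 + 1 / x.2.2.1 + 1 / x.2.2.2 = 1}).ncard = 108 := by
  rw [setEq]
  exact ⟨Ff.finite_toSet, by rw [Set.ncard_coe_finset]; exact cardFf⟩
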